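/- arXiv:2012.06684 — 2 statements merged into one kernel-verified Lean document; each statement's English description precedes it below -/
import Mathlib

section
/- Let d, m be natural numbers with d + m ≥ 1, and let A, C be d×d complex matrices and D an m×d complex matrix. Let M be the (d+d+m)×(d+d+m) block lower-triangular matrix whose diagonal blocks are -A, Aᵀ, and the m×m zero matrix, whose (2,1) block is C, whose (3,2) block is D, and whose remaining blocks zero. Then there exists an eigenvalue λ of M with Re(λ) ≥ 0; in particular, M is not Hurwitz stable (it is not the case that every eigenvalue of M has negative real part). -/
open Matrix

/-- The linearization of the combined Neural ODE backpropagation process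
`ψ(t) = [x(t), α(t), g(t)]`: a block lower-triangular matrix with diagonal blocks
`-A`, `Aᵀ` and the `m × m` zero matrix, with `(2,1)` block `C` and `(3,2)` block `D`. -/
noncomputable def backpropMatrix {d m : ℕ} (A C : Matrix (Fin d) (Fin d) ℂ)
    (D : Matrix (Fin m) (Fin d) ℂ) :
    Matrix ((Fin d ⊕ Fin d) ⊕ Fin m) ((Fin d ⊕ Fin d) ⊕ Fin m) ℂ :=
  Matrix.fromBlocks (Matrix.fromBlocks (-A) 0 C Aᵀ) 0 (Matrix.fromCols 0 D) 0

private lemma backprop_det {d m : ℕ} (A C : Matrix (Fin d) (Fin d) ℂ)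
    (D : Matrix (Fin m) (Fin d) ℂ) (μ : ℂ) :
    (algebraMap ℂ (Matrix ((Fin d ⊕ Fin d) ⊕ Fin m) ((Fin d ⊕ Fin d) ⊕ Fin m) ℂ) μ
      - backpropMatrix A C D).det
    = (μ • 1 + A).det * (μ • 1 - Aᵀ).det * μ ^ m := by
  simp [backpropMatrix, Algebra.algebraMap_eq_smul_one, ← Matrix.fromBlocks_one,
    Matrix.fromBlocks_smul, sub_eq_add_neg, Matrix.fromBlocks_neg, Matrix.fromBlocks_add,
    Matrix.det_fromBlocks_zero₁₂, Matrix.det_smul, mul_assoc]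

private lemma mem_spec_of_det {d m : ℕ} (A C : Matrix (Fin d) (Fin d) ℂ)
    (D : Matrix (Fin m) (Fin d) ℂ) (μ : ℂ)
    (h : (μ • 1 + A).det * (μ • (1 : Matrix (Fin d) (Fin d) ℂ) - Aᵀ).det * μ ^ m = 0) :
    μ ∈ spectrum ℂ (backpropMatrix A C D) := by
  rw [spectrum.mem_iff]
  intro hu
  rw [Matrix.isUnit_iff_isUnit_det, backprop_det A C D μ, h] at hu
  simp at hu

theorem backprop_not_hurwitz {d m : ℕ} (hdm : 1 ≤ d + m)
    (A C : Matrix (Fin d) (Fin d) ℂ) (D : Matrix (Fin m) (Fin d) ℂ) :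
    (∃ lam ∈ spectrum ℂ (backpropMatrix A C D), 0 ≤ lam.re) ∧
      ¬ (∀ lam ∈ spectrum ℂ (backpropMatrix A C D), lam.re < 0) := by
  have main : ∃ lam ∈ spectrum ℂ (backpropMatrix A C D), 0 ≤ lam.re := by
    rcases Nat.eq_zero_or_pos m with hm | hm
    · -- m = 0, hence d ≥ 1, and the spectrum of A is nonempty
      have hd : 0 < d := by omega
      haveI : Nonempty (Fin d) := ⟨⟨0, hd⟩⟩
      obtain ⟨lam, hlam⟩ := spectrum.nonempty_of_isAlgClosed_of_finiteDimensional ℂ A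
      rw [spectrum.mem_iff, Matrix.isUnit_iff_isUnit_det] at hlam
      have hdet : (lam • (1 : Matrix (Fin d) (Fin d) ℂ) - A).det = 0 := by
        rw [isUnit_iff_ne_zero, not_not, Algebra.algebraMap_eq_smul_one] at hlam
        exact hlam
      rcases le_or_gt 0 lam.re with hre | hre
      · refine ⟨lam, mem_spec_of_det A C D lam ?_, hre⟩
        have h2 : (lam • (1 : Matrix (Fin d) (Fin d) ℂ) - Aᵀ).det = 0 := by
          have : lam • (1 : Matrix (Fin d) (Fin d) ℂ) - Aᵀ
              = (lam • (1 : Matrix (Fin d) (Fin d) ℂ) - A)ᵀ := by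
            simp [Matrix.transpose_sub, Matrix.transpose_smul]
          rw [this, Matrix.det_transpose, hdet]
        rw [h2]
        ring
      · refine ⟨-lam, mem_spec_of_det A C D (-lam) ?_, by simp; linarith⟩
        have h1 : ((-lam) • (1 : Matrix (Fin d) (Fin d) ℂ) + A).det = 0 := by
          have : (-lam) • (1 : Matrix (Fin d) (Fin d) ℂ) + A
              = -(lam • (1 : Matrix (Fin d) (Fin d) ℂ) - A) := by
            rw [neg_smul, neg_sub, sub_eq_neg_add]
          rw [this, Matrix.det_neg, hdet, mul_zero]
        rw [h1]
        ring
    · -- m ≥ 1: 0 is an eigenvalue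
      refine ⟨0, mem_spec_of_det A C D 0 ?_, le_refl 0⟩
      have : (0 : ℂ) ^ m = 0 := by
        exact zero_pow (by omega)
      rw [this, mul_zero]
  refine ⟨main, ?_⟩
  intro hall
  obtain ⟨lam, hmem, hre⟩ := main
  linarith [hall lam hmem]
end

section
/- Let d ≥ 1 and let M be a d×d real matrix such that every complex eigenvalue λ of M (that is, every element of the spectrum of M viewed as a complex matrix) satisfies Re(λ) < 0. Then the system is exponentially stable: there exist constants C > 0 and ε > 0 such that for all t ≥ 0, the operator norm of the matrix exponential exp(t·M) satisfies ‖exp(t·M)‖ ≤ C·exp(-ε·t). In particular, for every initial condition x₀, exp(t·M)·x₀ → 0 as t → ∞. -/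
open Matrix Filter
open scoped Matrix.Norms.L2Operator

section Aux
open NormedSpace
set_option linter.unusedSectionVars false

variable {n : Type*} [Fintype n] [DecidableEq n]

variable {𝕜 : Type*} [RCLike 𝕜]

lemma aux_coord_le (x : EuclideanSpace 𝕜 n) (i : n) : ‖x i‖ ≤ ‖x‖ := by
  rw [EuclideanSpace.norm_eq]
  rw [show ‖x i‖ = Real.sqrt (‖x i‖ ^ 2) by rw [Real.sqrt_sq (norm_nonneg _)]]
  exact Real.sqrt_le_sqrt (Finset.single_le_sum (f := fun j => ‖x j‖^2)
    (fun j _ => sq_nonneg _) (Finset.mem_univ i))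

lemma aux_opnorm_le_sum_cols (A : Matrix n n 𝕜) :
    ‖A‖ ≤ ∑ j, ‖(EuclideanSpace.equiv n 𝕜).symm (A *ᵥ Pi.single j 1)‖ := by
  rw [Matrix.l2_opNorm_def]
  refine ContinuousLinearMap.opNorm_le_bound _
    (Finset.sum_nonneg fun j _ => norm_nonneg _) fun x => ?_
  have hx : (A *ᵥ (WithLp.equiv 2 (n → 𝕜)) x) = ∑ j, x j • (A *ᵥ Pi.single j 1) := by
    ext i
    simp [Matrix.mulVec_single, Matrix.mulVec, dotProduct, Finset.mul_sum, mul_comm]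
  calc ‖(Matrix.toEuclideanLin.trans LinearMap.toContinuousLinearMap A) x‖
      = ‖(WithLp.equiv 2 (n → 𝕜)).symm (A *ᵥ (WithLp.equiv 2 (n → 𝕜)) x)‖ := rfl
    _ = ‖∑ j, x j • (EuclideanSpace.equiv n 𝕜).symm (A *ᵥ Pi.single j 1)‖ := by
        rw [hx]; congr 1; ext i; simp [Finset.sum_apply]
    _ ≤ ∑ j, ‖x j • (EuclideanSpace.equiv n 𝕜).symm (A *ᵥ Pi.single j 1)‖ := norm_sum_le _ _
    _ ≤ ∑ j, ‖x‖ * ‖(EuclideanSpace.equiv n 𝕜).symm (A *ᵥ Pi.single j 1)‖ := by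
        refine Finset.sum_le_sum fun j _ => ?_
        rw [norm_smul]
        exact mul_le_mul_of_nonneg_right (aux_coord_le x j) (norm_nonneg _)
    _ = (∑ j, ‖(EuclideanSpace.equiv n 𝕜).symm (A *ᵥ Pi.single j 1)‖) * ‖x‖ := by
        rw [← Finset.mul_sum, mul_comm]

lemma aux_gen_eig_decay (A : Matrix n n ℂ) (μ : ℂ) (k : ℕ) (v : n → ℂ)
    (hv : ((A - μ • 1) ^ k) *ᵥ v = 0) (ε : ℝ) (hε : 0 < ε) (hμ : μ.re ≤ -2*ε) :
    ∃ C, 0 ≤ C ∧ ∀ t : ℝ, 0 ≤ t →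
      ‖(EuclideanSpace.equiv n ℂ).symm (NormedSpace.exp (t • A) *ᵥ v)‖ ≤ C * Real.exp (-ε*t) := by
  set N : Matrix n n ℂ := A - μ • 1 with hN
  set a : ℕ → ℝ := fun j => ‖(EuclideanSpace.equiv n ℂ).symm ((N ^ j) *ᵥ v)‖ with ha
  refine ⟨∑ j ∈ Finset.range k, a j * ε⁻¹ ^ j,
    Finset.sum_nonneg fun j _ => mul_nonneg (norm_nonneg _) (pow_nonneg (by positivity) _), ?_⟩
  intro t ht
  let L : Matrix n n ℂ →ₗ[ℂ] (n → ℂ) :=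
    { toFun := fun B => B *ᵥ v
      map_add' := fun B C => Matrix.add_mulVec B C v
      map_smul' := fun c B => smul_mulVec c B v }
  let Lc : Matrix n n ℂ →L[ℂ] (n → ℂ) := L.toContinuousLinearMap
  have hLc : ∀ B : Matrix n n ℂ, Lc B = B *ᵥ v := fun _ => rfl
  have hrs : ∀ B : Matrix n n ℂ, t • B = (t : ℂ) • B := by
    intro B; ext i j; simp [Matrix.smul_apply, Complex.real_smul]
  have hsplit : t • A = (↑t * μ) • (1 : Matrix n n ℂ) + (t : ℂ) • N := by
    rw [hrs]
    ext i j
    simp only [Matrix.add_apply, Matrix.smul_apply, hN, Matrix.sub_apply, Matrix.one_apply,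
      smul_eq_mul]
    rcases eq_or_ne i j with rfl | hij
    · simp; ring
    · simp [hij]
  have hcomm : Commute ((↑t * μ) • (1 : Matrix n n ℂ)) ((t : ℂ) • N) :=
    (Commute.one_left ((t : ℂ) • N)).smul_left _
  have hexp1 : NormedSpace.exp ((↑t * μ) • (1 : Matrix n n ℂ))
      = Complex.exp (↑t * μ) • (1 : Matrix n n ℂ) := by
    rw [← Algebra.algebraMap_eq_smul_one, ← NormedSpace.algebraMap_exp_comm,
      ← Complex.exp_eq_exp_ℂ, Algebra.algebraMap_eq_smul_one]
  have hNv : ∀ j, k ≤ j → (N ^ j) *ᵥ v = 0 := by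
    intro j hj
    rw [show j = (j - k) + k by omega, pow_add, ← Matrix.mulVec_mulVec, hv, Matrix.mulVec_zero]
  have hexp2 : NormedSpace.exp ((t : ℂ) • N) *ᵥ v
      = ∑ j ∈ Finset.range k, (((Nat.factorial j : ℂ))⁻¹ * (t : ℂ) ^ j) • ((N ^ j) *ᵥ v) := by
    rw [← hLc, NormedSpace.exp_eq_tsum (𝕂 := ℂ),
      Lc.map_tsum (NormedSpace.expSeries_summable' (𝕂 := ℂ) ((t : ℂ) • N))]
    have hterm : ∀ j : ℕ, Lc (((Nat.factorial j : ℂ))⁻¹ • ((t : ℂ) • N) ^ j)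
        = (((Nat.factorial j : ℂ))⁻¹ * (t : ℂ) ^ j) • ((N ^ j) *ᵥ v) := by
      intro j
      rw [smul_pow, _root_.map_smul, _root_.map_smul, hLc, smul_smul]
    simp_rw [hterm]
    exact tsum_eq_sum (fun j hj => by
      rw [hNv j (by simpa using hj), smul_zero])
  -- main computation
  have key : NormedSpace.exp (t • A) *ᵥ v
      = Complex.exp (↑t * μ) • ∑ j ∈ Finset.range k,
          (((Nat.factorial j : ℂ))⁻¹ * (t : ℂ) ^ j) • ((N ^ j) *ᵥ v) := by
    rw [hsplit, Matrix.exp_add_of_commute _ _ hcomm, hexp1,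
      smul_mul_assoc, one_mul, Matrix.smul_mulVec, hexp2]
  rw [key]
  rw [_root_.map_smul, norm_smul, map_sum]
  have h1 : ‖Complex.exp (↑t * μ)‖ = Real.exp (t * μ.re) := by
    rw [Complex.norm_exp]
    congr 1
    simp
  rw [h1]
  have h2 : ‖∑ j ∈ Finset.range k, (EuclideanSpace.equiv n ℂ).symm
        ((((Nat.factorial j : ℂ))⁻¹ * (t : ℂ) ^ j) • ((N ^ j) *ᵥ v))‖
      ≤ ∑ j ∈ Finset.range k, ((Nat.factorial j : ℝ))⁻¹ * t ^ j * a j := by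
    refine (norm_sum_le _ _).trans (Finset.sum_le_sum fun j _ => ?_)
    rw [_root_.map_smul, norm_smul]
    apply le_of_eq
    congr 1
    rw [norm_mul, norm_inv, norm_pow]
    simp [Complex.norm_real, abs_of_nonneg ht, Complex.norm_natCast]
  calc Real.exp (t * μ.re) * ‖∑ j ∈ Finset.range k, (EuclideanSpace.equiv n ℂ).symm
        ((((Nat.factorial j : ℂ))⁻¹ * (t : ℂ) ^ j) • ((N ^ j) *ᵥ v))‖
      ≤ Real.exp (-(2*ε) * t) * ∑ j ∈ Finset.range k, ((Nat.factorial j : ℝ))⁻¹ * t ^ j * a j := by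
        apply mul_le_mul _ h2 (norm_nonneg _) (Real.exp_nonneg _)
        apply Real.exp_le_exp.2
        nlinarith [mul_le_mul_of_nonneg_left hμ ht]
    _ = ∑ j ∈ Finset.range k, Real.exp (-(2*ε) * t) * (((Nat.factorial j : ℝ))⁻¹ * t ^ j) * a j := by
        rw [Finset.mul_sum]; refine Finset.sum_congr rfl fun j _ => by ring
    _ ≤ ∑ j ∈ Finset.range k, (a j * ε⁻¹ ^ j) * Real.exp (-ε * t) := by
        refine Finset.sum_le_sum fun j _ => ?_
        have hpow : (ε * t) ^ j / (Nat.factorial j) ≤ Real.exp (ε * t) := by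
          calc (ε * t) ^ j / (Nat.factorial j)
              ≤ ∑ i ∈ Finset.range (j+1), (ε * t) ^ i / (Nat.factorial i) :=
                Finset.single_le_sum (f := fun i => (ε*t)^i / (Nat.factorial i))
                  (fun i _ => by positivity) (by simp)
            _ ≤ Real.exp (ε * t) := by
                apply Real.sum_le_exp_of_nonneg (by positivity)
        have htj : Real.exp (-(2*ε) * t) * (((Nat.factorial j : ℝ))⁻¹ * t ^ j) ≤
            ε⁻¹ ^ j * Real.exp (-ε * t) := by
          have hεj : (0:ℝ) < ε ^ j := pow_pos hε j
          have h3 : t ^ j * ((Nat.factorial j : ℝ))⁻¹ ≤ ε⁻¹ ^ j * Real.exp (ε * t) := by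
            have hfac : (0:ℝ) < (Nat.factorial j : ℝ) := by
              exact_mod_cast Nat.factorial_pos j
            have key3 : ε ^ j * t ^ j ≤ Real.exp (ε * t) * (Nat.factorial j : ℝ) := by
              rw [← mul_pow]
              rw [div_le_iff₀ hfac] at hpow
              exact hpow
            have T : t ^ j ≤ (ε ^ j)⁻¹ * Real.exp (ε * t) * (Nat.factorial j : ℝ) := by
              calc t ^ j = (ε ^ j)⁻¹ * (ε ^ j * t ^ j) := by field_simp
                _ ≤ (ε ^ j)⁻¹ * (Real.exp (ε * t) * (Nat.factorial j : ℝ)) :=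
                    mul_le_mul_of_nonneg_left key3 (inv_pos.2 hεj).le
                _ = (ε ^ j)⁻¹ * Real.exp (ε * t) * (Nat.factorial j : ℝ) := by ring
            rw [inv_pow]
            calc t ^ j * ((Nat.factorial j : ℝ))⁻¹
                ≤ ((ε ^ j)⁻¹ * Real.exp (ε * t) * (Nat.factorial j : ℝ)) * ((Nat.factorial j : ℝ))⁻¹ :=
                  mul_le_mul_of_nonneg_right T (inv_nonneg.2 hfac.le)
              _ = (ε ^ j)⁻¹ * Real.exp (ε * t) := by field_simp
          calc Real.exp (-(2*ε) * t) * (((Nat.factorial j : ℝ))⁻¹ * t ^ j)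
              = (t ^ j * ((Nat.factorial j : ℝ))⁻¹) * Real.exp (-(2*ε) * t) := by ring
            _ ≤ (ε⁻¹ ^ j * Real.exp (ε * t)) * Real.exp (-(2*ε) * t) := by
                apply mul_le_mul_of_nonneg_right h3 (Real.exp_nonneg _)
            _ = ε⁻¹ ^ j * Real.exp (-ε * t) := by
                rw [mul_assoc, ← Real.exp_add]; ring_nf
        calc Real.exp (-(2*ε) * t) * (((Nat.factorial j : ℝ))⁻¹ * t ^ j) * a j
            ≤ (ε⁻¹ ^ j * Real.exp (-ε * t)) * a j :=
              mul_le_mul_of_nonneg_right htj (norm_nonneg _)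
          _ = (a j * ε⁻¹ ^ j) * Real.exp (-ε * t) := by ring
    _ = (∑ j ∈ Finset.range k, a j * ε⁻¹ ^ j) * Real.exp (-ε * t) := by
        rw [Finset.sum_mul]

lemma aux_decay_all (A : Matrix n n ℂ) (ε : ℝ) (hε : 0 < ε)
    (hspec : ∀ μ ∈ spectrum ℂ A, μ.re ≤ -2*ε) (v : n → ℂ) :
    ∃ C, 0 ≤ C ∧ ∀ t : ℝ, 0 ≤ t →
      ‖(EuclideanSpace.equiv n ℂ).symm (NormedSpace.exp (t • A) *ᵥ v)‖ ≤ C * Real.exp (-ε*t) := by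
  set f : Module.End ℂ (n → ℂ) := Matrix.toLinAlgEquiv' A with hf
  have hv : v ∈ ⨆ μ : ℂ, f.maxGenEigenspace μ := by
    rw [Module.End.iSup_maxGenEigenspace_eq_top]; trivial
  refine Submodule.iSup_induction (motive := fun w => ∃ C, 0 ≤ C ∧ ∀ t : ℝ, 0 ≤ t →
      ‖(EuclideanSpace.equiv n ℂ).symm (NormedSpace.exp (t • A) *ᵥ w)‖ ≤ C * Real.exp (-ε*t))
      _ hv ?_ ?_ ?_
  · intro μ w hw
    rcases eq_or_ne w 0 with rfl | hw0
    · exact ⟨0, le_refl 0, fun t _ => by simp⟩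
    obtain ⟨k, hk⟩ := (Module.End.mem_maxGenEigenspace f μ w).1 hw
    have hwmem : w ∈ f.genEigenspace μ (k : ℕ∞) :=
      (Module.End.mem_genEigenspace_nat).2 hk
    have hμspec : μ.re ≤ -2*ε := by
      apply hspec
      rw [← AlgEquiv.spectrum_eq (Matrix.toLinAlgEquiv' (R := ℂ) (n := n)) A,
        ← Module.End.hasEigenvalue_iff_mem_spectrum]
      refine Module.End.hasEigenvalue_of_hasGenEigenvalue (k := k) ?_
      exact Module.End.HasUnifEigenvector.hasUnifEigenvalue (x := w) ⟨hwmem, hw0⟩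
    have hmat : ((A - μ • 1) ^ k) *ᵥ w = 0 := by
      have heq : (f - μ • 1)^k = Matrix.toLinAlgEquiv' ((A - μ • 1)^k) := by
        rw [map_pow, map_sub, _root_.map_smul, _root_.map_one]
      rw [heq, Matrix.toLinAlgEquiv'_apply] at hk
      exact hk
    exact aux_gen_eig_decay A μ k w hmat ε hε hμspec
  · exact ⟨0, le_refl 0, fun t _ => by simp⟩
  · rintro x y ⟨C₁, hC₁, h₁⟩ ⟨C₂, hC₂, h₂⟩
    refine ⟨C₁ + C₂, by linarith, fun t ht => ?_⟩
    rw [Matrix.mulVec_add, map_add]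
    calc ‖(EuclideanSpace.equiv n ℂ).symm (NormedSpace.exp (t • A) *ᵥ x)
          + (EuclideanSpace.equiv n ℂ).symm (NormedSpace.exp (t • A) *ᵥ y)‖
        ≤ ‖(EuclideanSpace.equiv n ℂ).symm (NormedSpace.exp (t • A) *ᵥ x)‖
          + ‖(EuclideanSpace.equiv n ℂ).symm (NormedSpace.exp (t • A) *ᵥ y)‖ := norm_add_le _ _
      _ ≤ C₁ * Real.exp (-ε*t) + C₂ * Real.exp (-ε*t) := add_le_add (h₁ t ht) (h₂ t ht)
      _ = (C₁ + C₂) * Real.exp (-ε*t) := by ring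

lemma aux_norm_complexify (y : n → ℝ) :
    ‖(EuclideanSpace.equiv n ℝ).symm y‖
      = ‖(EuclideanSpace.equiv n ℂ).symm (fun i => (y i : ℂ))‖ := by
  rw [show ((EuclideanSpace.equiv n ℝ).symm y : EuclideanSpace ℝ n)
      = (WithLp.equiv 2 (n → ℝ)).symm y from rfl,
    show ((EuclideanSpace.equiv n ℂ).symm (fun i => (y i : ℂ)) : EuclideanSpace ℂ n)
      = (WithLp.equiv 2 (n → ℂ)).symm (fun i => (y i : ℂ)) from rfl,
    EuclideanSpace.norm_eq, EuclideanSpace.norm_eq]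
  congr 1
  refine Finset.sum_congr rfl fun i _ => ?_
  simp [Complex.norm_real]

lemma aux_mulVec_complexify (B : Matrix n n ℝ) (y : n → ℝ) :
    (B.map (Complex.ofReal : ℝ → ℂ)) *ᵥ (fun i => (y i : ℂ))
      = fun i => (((B *ᵥ y) i : ℝ) : ℂ) := by
  ext i
  simp only [Matrix.mulVec, dotProduct, Matrix.map_apply]
  push_cast
  rfl

theorem hurwitz_exp_stable {d : ℕ} (hd : 1 ≤ d) (M : Matrix (Fin d) (Fin d) ℝ)
    (h : ∀ lam ∈ spectrum ℂ (M.map (Complex.ofReal : ℝ → ℂ)), lam.re < 0) :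
    ∃ C > (0 : ℝ), ∃ ε > (0 : ℝ),
      (∀ t : ℝ, 0 ≤ t → ‖NormedSpace.exp (t • M)‖ ≤ C * Real.exp (-ε * t)) ∧
      ∀ x₀ : Fin d → ℝ,
        Tendsto (fun t : ℝ => NormedSpace.exp (t • M) *ᵥ x₀) atTop (nhds 0) := by
  have hne : Nonempty (Fin d) := ⟨⟨0, hd⟩⟩
  set Mc : Matrix (Fin d) (Fin d) ℂ := M.map (Complex.ofReal : ℝ → ℂ) with hMc
  -- the spectrum is finite and nonempty
  have hfin := Matrix.finite_spectrum Mc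
  have hnon : (spectrum ℂ Mc).Nonempty := spectrum.nonempty Mc
  set s : Finset ℂ := hfin.toFinset with hs
  have hsne : (s.image Complex.re).Nonempty := by
    obtain ⟨μ, hμ⟩ := hnon
    exact ⟨μ.re, Finset.mem_image_of_mem _ (hfin.mem_toFinset.2 hμ)⟩
  set r : ℝ := (s.image Complex.re).max' hsne with hr
  have hrneg : r < 0 := by
    rw [hr, Finset.max'_lt_iff]
    intro b hb
    obtain ⟨μ, hμ, rfl⟩ := Finset.mem_image.1 hb
    exact h μ (hfin.mem_toFinset.1 hμ)
  set ε : ℝ := -r/2 with hε'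
  have hε : 0 < ε := by rw [hε']; linarith
  have hspec2 : ∀ μ ∈ spectrum ℂ Mc, μ.re ≤ -2*ε := by
    intro μ hμ
    have : μ.re ≤ r := Finset.le_max' _ _ (Finset.mem_image_of_mem _ (hfin.mem_toFinset.2 hμ))
    rw [hε']; linarith
  -- column decay constants
  have hcols : ∀ j : Fin d, ∃ C, 0 ≤ C ∧ ∀ t : ℝ, 0 ≤ t →
      ‖(EuclideanSpace.equiv (Fin d) ℂ).symm (NormedSpace.exp (t • Mc) *ᵥ
        (fun i => (((Pi.single j 1 : Fin d → ℝ) i : ℝ) : ℂ)))‖ ≤ C * Real.exp (-ε*t) :=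
    fun j => aux_decay_all Mc ε hε hspec2 _
  choose Cc hCc0 hCc using hcols
  -- commuting exp with complexification
  have hmapexp : ∀ t : ℝ, (NormedSpace.exp (t • M)).map (Complex.ofReal : ℝ → ℂ)
      = NormedSpace.exp (t • Mc) := by
    intro t
    let lm : Matrix (Fin d) (Fin d) ℝ →ₗ[ℝ] Matrix (Fin d) (Fin d) ℂ :=
      { toFun := fun B => B.map (Complex.ofReal : ℝ → ℂ)
        map_add' := fun B C => by ext i j; simp [Matrix.map_apply]
        map_smul' := fun c B => by ext i j; simp [Matrix.map_apply, Complex.real_smul] }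
    have hcont : Continuous ((Complex.ofRealHom.mapMatrix :
        Matrix (Fin d) (Fin d) ℝ →+* Matrix (Fin d) (Fin d) ℂ) : Matrix (Fin d) (Fin d) ℝ → _) :=
      lm.continuous_of_finiteDimensional
    have := NormedSpace.map_exp_of_mem_ball (𝕂 := ℝ) (Complex.ofRealHom.mapMatrix :
        Matrix (Fin d) (Fin d) ℝ →+* Matrix (Fin d) (Fin d) ℂ) hcont (t • M)
      ((NormedSpace.expSeries_radius_eq_top ℝ (Matrix (Fin d) (Fin d) ℝ)).symm ▸ edist_lt_top _ _)
    have hsm : (Complex.ofRealHom.mapMatrix (t • M) : Matrix (Fin d) (Fin d) ℂ) = t • Mc := by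
      ext i j
      simp only [RingHom.mapMatrix_apply, Matrix.map_apply, Matrix.smul_apply, hMc,
        Complex.real_smul, smul_eq_mul, Complex.ofRealHom_eq_coe]
      push_cast
      ring
    rw [hsm] at this
    exact this
  -- the operator norm bound
  set C : ℝ := (∑ j, Cc j) + 1 with hC
  have hCpos : 0 < C := by
    rw [hC]
    have : 0 ≤ ∑ j, Cc j := Finset.sum_nonneg fun j _ => hCc0 j
    linarith
  have hop : ∀ t : ℝ, 0 ≤ t → ‖NormedSpace.exp (t • M)‖ ≤ C * Real.exp (-ε * t) := by
    intro t ht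
    calc ‖NormedSpace.exp (t • M)‖
        ≤ ∑ j, ‖(EuclideanSpace.equiv (Fin d) ℝ).symm
            (NormedSpace.exp (t • M) *ᵥ Pi.single j 1)‖ := aux_opnorm_le_sum_cols _
      _ ≤ ∑ j, Cc j * Real.exp (-ε*t) := by
          refine Finset.sum_le_sum fun j _ => ?_
          rw [aux_norm_complexify, show (fun i => (((NormedSpace.exp (t • M) *ᵥ
              Pi.single j 1) i : ℝ) : ℂ)) = NormedSpace.exp (t • Mc) *ᵥ
              (fun i => (((Pi.single j 1 : Fin d → ℝ) i : ℝ) : ℂ)) from by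
            rw [← hmapexp t, aux_mulVec_complexify]]
          exact hCc j t ht
      _ = (∑ j, Cc j) * Real.exp (-ε*t) := by rw [Finset.sum_mul]
      _ ≤ C * Real.exp (-ε*t) := by
          apply mul_le_mul_of_nonneg_right _ (Real.exp_nonneg _)
          rw [hC]; linarith
  refine ⟨C, hCpos, ε, hε, hop, ?_⟩
  intro x₀
  have hg : Tendsto (fun t : ℝ => (C * ‖(EuclideanSpace.equiv (Fin d) ℝ).symm x₀‖)
      * Real.exp (-ε*t)) atTop (nhds 0) := by
    have h1 : Tendsto (fun t : ℝ => -ε*t) atTop atBot := by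
      have := (tendsto_id.const_mul_atTop hε)
      have h2 := tendsto_neg_atTop_atBot.comp this
      simpa [Function.comp_def, neg_mul] using h2
    have h3 := Real.tendsto_exp_atBot.comp h1
    have h4 := h3.const_mul (C * ‖(EuclideanSpace.equiv (Fin d) ℝ).symm x₀‖)
    simpa using h4
  apply squeeze_zero_norm' _ hg
  filter_upwards [eventually_ge_atTop (0:ℝ)] with t ht
  have hb : ‖NormedSpace.exp (t • M) *ᵥ x₀‖
      ≤ ‖(EuclideanSpace.equiv (Fin d) ℝ).symm (NormedSpace.exp (t • M) *ᵥ x₀)‖ := by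
    rw [pi_norm_le_iff_of_nonneg (norm_nonneg _)]
    intro i
    exact aux_coord_le ((EuclideanSpace.equiv (Fin d) ℝ).symm
      (NormedSpace.exp (t • M) *ᵥ x₀)) i
  calc ‖NormedSpace.exp (t • M) *ᵥ x₀‖
      ≤ ‖(EuclideanSpace.equiv (Fin d) ℝ).symm (NormedSpace.exp (t • M) *ᵥ x₀)‖ := hb
    _ ≤ ‖NormedSpace.exp (t • M)‖ * ‖(EuclideanSpace.equiv (Fin d) ℝ).symm x₀‖ := by
        exact Matrix.l2_opNorm_mulVec _ _
    _ ≤ (C * Real.exp (-ε*t)) * ‖(EuclideanSpace.equiv (Fin d) ℝ).symm x₀‖ :=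
        mul_le_mul_of_nonneg_right (hop t ht) (norm_nonneg _)
    _ = (C * ‖(EuclideanSpace.equiv (Fin d) ℝ).symm x₀‖) * Real.exp (-ε*t) := by ring

end Aux
end
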